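/- Let O be a nonempty open connected subset of ℝ^q and let u : ℝ^q → ℝ be locally Lipschitz on O, i.e. every point of O has a neighborhood on which u is Lipschitz. Suppose that for Lebesgue-almost every point a of O, u is Fréchet differentiable at a with derivative equal to zero. Then u is constant on O. -/

import Mathlib

open Filter Topology MeasureTheory Metric ContinuousLinearMap Function
open scoped Convolution NNReal

private lemma aux_ball_const (q : ℕ) {K : ℝ≥0} {f : EuclideanSpace ℝ (Fin q) → ℝ}
    (hf : LipschitzWith K f) (c : EuclideanSpace ℝ (Fin q)) {r : ℝ} (hr : 0 < r)
    (hae : ∀ᵐ x : EuclideanSpace ℝ (Fin q), x ∈ ball c (2 * r) →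
      HasFDerivAt f (0 : EuclideanSpace ℝ (Fin q) →L[ℝ] ℝ) x) :
    ∀ x ∈ ball c r, f x = f c := by
  set L : ℝ →L[ℝ] ℝ →L[ℝ] ℝ := ContinuousLinearMap.lsmul ℝ ℝ with hLdef
  have flipL : L.flip = L := by
    ext
    simp [L, mul_comm]
  have hpos : ∀ n : ℕ, (0 : ℝ) < r / (n + 2) := fun n => by positivity
  let φ : ℕ → ContDiffBump (0 : EuclideanSpace ℝ (Fin q)) := fun n =>
    ⟨r / (n + 2) / 2, r / (n + 2), by positivity, half_lt_self (hpos n)⟩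
  have hφrOut : ∀ n, (φ n).rOut = r / (n + 2) := fun n => rfl
  have hφlt : ∀ n, (φ n).rOut < r := by
    intro n
    rw [hφrOut]
    calc r / (n + 2) ≤ r / 2 :=
          div_le_div_of_nonneg_left hr.le two_pos (by linarith [Nat.cast_nonneg (α := ℝ) n])
      _ < r := half_lt_self hr
  have hφ0 : Tendsto (fun n => (φ n).rOut) atTop (𝓝 0) := by
    simp only [hφrOut]
    have h2 : Tendsto (fun n : ℕ => ((n : ℝ) + 2)) atTop atTop :=
      tendsto_atTop_add_const_right atTop 2 tendsto_natCast_atTop_atTop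
    exact tendsto_const_nhds.div_atTop h2
  set Fn : ℕ → EuclideanSpace ℝ (Fin q) → ℝ := fun n => (φ n).normed volume ⋆[L, volume] f with hFn
  have hswap : ∀ n, Fn n = f ⋆[L, volume] (φ n).normed volume := by
    intro n
    rw [hFn]
    rw [← convolution_flip, flipL]
  have hfi : LocallyIntegrable f volume := hf.continuous.locallyIntegrable
  -- Step A : derivative of the mollification vanishes on the small ball
  have stepA : ∀ n, ∀ x₀ ∈ ball c r,
      HasFDerivAt (Fn n) (0 : EuclideanSpace ℝ (Fin q) →L[ℝ] ℝ) x₀ := by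
    intro n x₀ hx₀
    have hφsupp : HasCompactSupport ((φ n).normed volume) :=
      (φ n).hasCompactSupport_normed
    have hφcd : ContDiff ℝ 1 ((φ n).normed volume) := (φ n).contDiff_normed
    have hφcd' : Continuous (fderiv ℝ ((φ n).normed volume)) :=
      ((φ n).contDiff_normed (n := 2)).continuous_fderiv (by norm_num)
    have hd := hφsupp.hasFDerivAt_convolution_right L hfi hφcd x₀
    have hW : (f ⋆[L.precompR (EuclideanSpace ℝ (Fin q)), volume] fderiv ℝ ((φ n).normed volume)) x₀ = 0 := by
      ext v
      rw [ContinuousLinearMap.zero_apply]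
      have h1 : ((f ⋆[L.precompR (EuclideanSpace ℝ (Fin q)), volume] fderiv ℝ ((φ n).normed volume)) x₀) v
          = (f ⋆[L, volume] (fun a => fderiv ℝ ((φ n).normed volume) a v)) x₀ :=
        convolution_precompR_apply L hfi ((hφsupp.fderiv (𝕜 := ℝ))) hφcd' x₀ v
      -- the translated bump
      set gb : EuclideanSpace ℝ (Fin q) → ℝ := fun t => (φ n).normed volume (x₀ - t) with hgbdef
      -- Lipschitz constant for the bump
      obtain ⟨Cf, hCf⟩ := hφcd'.bounded_above_of_compact_support (hφsupp.fderiv (𝕜 := ℝ))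
      have hφlip : LipschitzWith Cf.toNNReal ((φ n).normed volume) := by
        apply lipschitzWith_of_nnnorm_fderiv_le (𝕜 := ℝ) (hφcd.differentiable one_ne_zero)
        intro x
        rw [← norm_toNNReal]
        exact Real.toNNReal_mono (hCf x)
      have hgbLip : LipschitzWith Cf.toNNReal gb := by
        have h1 : LipschitzWith 1 (fun t : EuclideanSpace ℝ (Fin q) => x₀ - t) :=
          LipschitzWith.of_dist_le_mul fun a b => by
            rw [dist_sub_left, NNReal.coe_one, one_mul]
        have h2 := hφlip.comp h1
        rw [mul_one] at h2
        exact h2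
      have hgbsupp : HasCompactSupport gb :=
        hφsupp.comp_homeomorph (Homeomorph.subLeft x₀)
      have key := hf.integral_lineDeriv_mul_eq (μ := volume) hgbLip hgbsupp v
      -- LHS is zero
      have hLHS : ∫ x, lineDeriv ℝ f x v * gb x = 0 := by
        apply integral_eq_zero_of_ae
        filter_upwards [hae] with x hx
        by_cases hxb : x ∈ ball c (2 * r)
        · have := ((hx hxb).hasLineDerivAt v).lineDeriv
          simp only [ContinuousLinearMap.zero_apply] at this
          simp [this]
        · have hgb0 : gb x = 0 := by
            by_contra h
            have hmem : x₀ - x ∈ Function.support ((φ n).normed volume) := h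
            rw [(φ n).support_normed_eq, mem_ball_zero_iff] at hmem
            apply hxb
            have hdist : dist x x₀ < (φ n).rOut := by
              rw [dist_eq_norm, ← norm_neg]
              simpa [neg_sub] using hmem
            have : dist x c < 2 * r := by
              calc dist x c ≤ dist x x₀ + dist x₀ c := dist_triangle x x₀ c
                _ < (φ n).rOut + r := add_lt_add hdist hx₀
                _ ≤ r + r := by linarith [hφlt n]
                _ = 2 * r := by ring
            exact this
          simp [hgb0]
      -- identify line derivative of gb
      have hR : ∀ x : EuclideanSpace ℝ (Fin q), lineDeriv ℝ gb x (-v)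
          = fderiv ℝ ((φ n).normed volume) (x₀ - x) v := by
        intro x
        have hdiff := (hφcd.differentiable one_ne_zero (x₀ - x)).hasFDerivAt
        have hd1 : HasDerivAt (fun t : ℝ => x₀ - x + t • v) v 0 := by
          simpa using ((hasDerivAt_id (0 : ℝ)).smul_const v).const_add (x₀ - x)
        have hd2 : HasDerivAt (fun t : ℝ => (φ n).normed volume (x₀ - x + t • v))
            (fderiv ℝ ((φ n).normed volume) (x₀ - x) v) 0 := by
          have hdiff' : HasFDerivAt ((φ n).normed volume)
              (fderiv ℝ ((φ n).normed volume) (x₀ - x)) (x₀ - x + (0:ℝ) • v) := by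
            simpa using hdiff
          exact hdiff'.comp_hasDerivAt (x := (0 : ℝ)) hd1
        have h1 : HasLineDerivAt ℝ gb
            (fderiv ℝ ((φ n).normed volume) (x₀ - x) v) x (-v) := by
          show HasDerivAt (fun t : ℝ => gb (x + t • (-v)))
            (fderiv ℝ ((φ n).normed volume) (x₀ - x) v) 0
          convert hd2 using 2 with t
          simp only [hgbdef, smul_neg]
          congr 1
          abel
        exact h1.lineDeriv
      -- put everything together
      rw [h1, convolution_def]
      have : ∀ t : EuclideanSpace ℝ (Fin q), L (f t) (fderiv ℝ ((φ n).normed volume) (x₀ - t) v)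
          = lineDeriv ℝ gb t (-v) * f t := by
        intro t
        rw [hR t]
        simp [L, mul_comm]
      rw [integral_congr_ae (Eventually.of_forall this), ← key, hLHS]
    rw [hswap n]
    rw [← hW]
    exact hd
  -- Step B : mollified functions are constant on the ball
  have stepB : ∀ n, ∀ x ∈ ball c r, Fn n x = Fn n c := by
    intro n x hx
    have hconv : Convex ℝ (ball c r) := convex_ball c r
    apply hconv.is_const_of_fderivWithin_eq_zero
      (fun y hy => ((stepA n y hy).differentiableAt).differentiableWithinAt)
    · intro y hy
      rw [fderivWithin_eq_fderiv (isOpen_ball.uniqueDiffWithinAt hy)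
        (stepA n y hy).differentiableAt]
      exact (stepA n y hy).fderiv
    · exact hx
    · exact mem_ball_self hr
  -- Step C : convergence
  have stepC : ∀ x : EuclideanSpace ℝ (Fin q), Tendsto (fun n => Fn n x) atTop (𝓝 (f x)) := by
    intro x
    exact ContDiffBump.convolution_tendsto_right_of_continuous hφ0 hf.continuous x
  intro x hx
  have h1 : Tendsto (fun n => Fn n x) atTop (𝓝 (f c)) := by
    have : (fun n => Fn n x) = fun n => Fn n c := funext fun n => stepB n x hx
    rw [this]
    exact stepC c
  exact tendsto_nhds_unique (stepC x) h1

/-- A function which is locally Lipschitz on a nonempty open connected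
set `O ⊆ ℝ^q` and whose Fréchet derivative exists and vanishes at Lebesgue-almost every
point of `O` is constant on `O`. -/
theorem stmt_6 (q : ℕ) (O : Set (EuclideanSpace ℝ (Fin q)))
    (hO : IsOpen O) (hOconn : IsConnected O)
    (u : EuclideanSpace ℝ (Fin q) → ℝ)
    (hLip : ∀ a ∈ O, ∃ K : NNReal, ∃ V ∈ 𝓝 a, LipschitzOnWith K u V)
    (hderiv : ∀ᵐ a ∂(volume.restrict O),
      HasFDerivAt u (0 : EuclideanSpace ℝ (Fin q) →L[ℝ] ℝ) a) :
    ∀ a ∈ O, ∀ b ∈ O, u a = u b := by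
  -- local constancy
  have hloc : ∀ c ∈ O, ∃ r : ℝ, 0 < r ∧ ball c r ⊆ O ∧ ∀ x ∈ ball c r, u x = u c := by
    intro c hc
    obtain ⟨K, V, hV, hKV⟩ := hLip c hc
    have hOV : O ∩ V ∈ 𝓝 c := Filter.inter_mem (hO.mem_nhds hc) hV
    obtain ⟨ε, hε, hball⟩ := Metric.nhds_basis_closedBall.mem_iff.1 hOV
    refine ⟨ε / 2, by positivity, ?_, ?_⟩
    · intro x hx
      exact (hball (Metric.ball_subset_closedBall.trans
        (Metric.closedBall_subset_closedBall (by linarith)) hx)).1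
    · -- extend u from the closed ball to a global Lipschitz function
      have h2r : Metric.closedBall c (2 * (ε / 2)) ⊆ O ∩ V := by
        have : 2 * (ε / 2) = ε := by ring
        rw [this]
        exact hball
      have hlipOn : LipschitzOnWith K u (Metric.closedBall c (2 * (ε / 2))) :=
        hKV.mono (fun x hx => (h2r hx).2)
      obtain ⟨f, hfLip, hfEq⟩ := hlipOn.extend_real
      have hball2 : Metric.ball c (2 * (ε / 2)) ⊆ O :=
        (Metric.ball_subset_closedBall.trans h2r).trans (Set.inter_subset_left)
      -- almost-everywhere vanishing derivative for f on the double ball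
      have hae : ∀ᵐ x : EuclideanSpace ℝ (Fin q),
          x ∈ Metric.ball c (2 * (ε / 2)) →
            HasFDerivAt f (0 : EuclideanSpace ℝ (Fin q) →L[ℝ] ℝ) x := by
        have h1 : ∀ᵐ x ∂(volume.restrict (Metric.ball c (2 * (ε / 2)))),
            HasFDerivAt u (0 : EuclideanSpace ℝ (Fin q) →L[ℝ] ℝ) x :=
          ae_restrict_of_ae_restrict_of_subset hball2 hderiv
        have h2 := (ae_restrict_iff' measurableSet_ball).1 h1
        filter_upwards [h2] with x hx hxb
        have hEqNhds : f =ᶠ[𝓝 x] u := by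
          filter_upwards [Metric.isOpen_ball.mem_nhds hxb] with y hy
          exact (hfEq (Metric.ball_subset_closedBall hy)).symm
        exact (hx hxb).congr_of_eventuallyEq hEqNhds
      have := aux_ball_const q hfLip c (by positivity : (0:ℝ) < ε / 2) hae
      intro x hx
      have hxc : x ∈ Metric.closedBall c (2 * (ε / 2)) :=
        Metric.ball_subset_closedBall (by
          refine Metric.ball_subset_ball ?_ hx
          linarith)
      have hcc : c ∈ Metric.closedBall c (2 * (ε / 2)) :=
        Metric.mem_closedBall_self (by positivity)
      rw [hfEq hxc, hfEq hcc]
      exact this x hx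
  -- connectedness argument
  intro a ha b hb
  set U : Set (EuclideanSpace ℝ (Fin q)) := {x | x ∈ O ∧ u x = u a} with hU
  set W : Set (EuclideanSpace ℝ (Fin q)) := {x | x ∈ O ∧ u x ≠ u a} with hW
  have hUopen : IsOpen U := by
    rw [Metric.isOpen_iff]
    rintro x ⟨hxO, hxu⟩
    obtain ⟨r, hr, hrO, hrc⟩ := hloc x hxO
    exact ⟨r, hr, fun y hy => ⟨hrO hy, (hrc y hy).trans hxu⟩⟩
  have hWopen : IsOpen W := by
    rw [Metric.isOpen_iff]
    rintro x ⟨hxO, hxu⟩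
    obtain ⟨r, hr, hrO, hrc⟩ := hloc x hxO
    exact ⟨r, hr, fun y hy => ⟨hrO hy, by rw [hrc y hy]; exact hxu⟩⟩
  have hdisj : Disjoint U W := by
    rw [Set.disjoint_iff]
    rintro x ⟨⟨-, h1⟩, ⟨-, h2⟩⟩
    exact (h2 h1).elim
  have hsub : O ⊆ U ∪ W := by
    intro x hx
    by_cases h : u x = u a
    · exact Or.inl ⟨hx, h⟩
    · exact Or.inr ⟨hx, h⟩
  have hOU : O ⊆ U :=
    hOconn.isPreconnected.subset_left_of_subset_union hUopen hWopen hdisj hsub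
      ⟨a, ha, ha, rfl⟩
  exact ((hOU hb).2).symm
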